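/- In the coupled construction, for every 1 ≤ l ≤ m < n, the σ-algebra generated by (α_k, β_k) for l ≤ k ≤ m is independent of the σ-algebra generated by (α_k, β_k) for m+1 ≤ k ≤ n, conditionally on γ_{m+1}. -/

import Mathlib

open MeasureTheory ProbabilityTheory Finset

noncomputable section

/-- The sample space of the coupled construction: `ε`, `(α_k)`, `(β_k)`. -/
abbrev Omega (K : ℕ) := Bool × (Fin K → Fin 3) × (Fin K → Bool)

/-- The uniform probability measure on `Omega K`; its coordinates are independent,
`ε` is uniform on `{-1,1}` (via `Bool`), each `α_k` is Bernoulli(1/3)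
(`α_k = 1` iff the `Fin 3` coordinate equals `0`), each `β_k` uniform on `{-1,1}`. -/
def unif (K : ℕ) : Measure (Omega K) := (PMF.uniformOfFintype (Omega K)).toMeasure

def sgn (b : Bool) : ℤ := if b then 1 else -1

def epsRV {K : ℕ} (ω : Omega K) : ℤ := sgn ω.1

def alphaRV {K : ℕ} (k : Fin K) (ω : Omega K) : ℤ := if ω.2.1 k = 0 then 1 else 0

def alphaN {K : ℕ} (k : Fin K) (ω : Omega K) : ℕ := if ω.2.1 k = 0 then 1 else 0

def betaRV {K : ℕ} (k : Fin K) (ω : Omega K) : ℤ := sgn (ω.2.2 k)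

/-- `γ_{j+1} = ε · (-1)^{α_1 + ⋯ + α_j}` (0-indexed: `gammaRV j` is the paper's `γ_{j+1}`). -/
def gammaRV {K : ℕ} (j : ℕ) (ω : Omega K) : ℤ :=
  epsRV ω * (-1) ^ (∑ k ∈ Finset.univ.filter (fun k : Fin K => (k : ℕ) < j), alphaN k ω)

/-- `A_k = (1-α_k)β_k + α_k γ_k`. -/
def ARV {K : ℕ} (k : Fin K) (ω : Omega K) : ℤ :=
  (1 - alphaRV k ω) * betaRV k ω + alphaRV k ω * gammaRV (k : ℕ) ω

/-- `B_k = (1-α_k)β_k - α_k γ_k`. -/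
def BRV {K : ℕ} (k : Fin K) (ω : Omega K) : ℤ :=
  (1 - alphaRV k ω) * betaRV k ω - alphaRV k ω * gammaRV (k : ℕ) ω

/-- The nonzero coordinates of `v - u` have alternating signs: whenever `i < j` are
two "changed" coordinates with no changed coordinate strictly between them,
the changes have opposite signs. -/
def AltSigns {K : ℕ} (u v : Fin K → ℤ) : Prop :=
  ∀ i j : Fin K, i < j → u i ≠ v i → u j ≠ v j →
    (∀ l : Fin K, i < l → l < j → u l = v l) → v i - u i = -(v j - u j)

/-- The first nonzero coordinate of `v - u` is negative if `s = true` (positive edges `E⁺`),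
positive if `s = false` (negative edges `E⁻`). -/
def FirstSign {K : ℕ} (s : Bool) (u v : Fin K → ℤ) : Prop :=
  ∀ i : Fin K, u i ≠ v i → (∀ l : Fin K, l < i → u l = v l) →
    (if s then v i - u i < 0 else 0 < v i - u i)

/-- `(u,v)` is an edge of sign `s` of the multigraph `G_K`: either a loop (each vertex
carries one loop of each sign), or `u ≠ v` with alternating signs starting as dictated by `s`. -/
def IsEdge {K : ℕ} (s : Bool) (u v : Fin K → ℤ) : Prop :=
  u = v ∨ (u ≠ v ∧ AltSigns u v ∧ FirstSign s u v)

/-- Interpret a Boolean vector as a vertex of `V_K = {-1,1}^K`. -/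
def toPM {K : ℕ} (b : Fin K → Bool) : Fin K → ℤ := fun k => if b k then 1 else -1

instance (K : ℕ) : IsProbabilityMeasure (unif K) :=
  PMF.toMeasure.isProbabilityMeasure _


section Aux


lemma condIndep_of_indep_sup {Ω : Type*} {m' m₁ m₂ : MeasurableSpace Ω}
    [mΩ : MeasurableSpace Ω] [StandardBorelSpace Ω]
    {μ : Measure Ω} [IsProbabilityMeasure μ]
    (hm' : m' ≤ mΩ) (hm₁ : m₁ ≤ mΩ) (hm₂ : m₂ ≤ mΩ)
    (h : Indep (m₁ ⊔ m') m₂ μ) :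
    CondIndep m' m₁ m₂ hm' μ := by
  rw [condIndep_iff m' m₁ m₂ hm' hm₁ hm₂ μ]
  intro t1 t2 ht1 ht2
  have hM : m₁ ⊔ m' ≤ mΩ := sup_le hm₁ hm'
  have ht1' : MeasurableSet[m₁ ⊔ m'] t1 := (le_sup_left : m₁ ≤ m₁ ⊔ m') t1 ht1
  have hmt1 : MeasurableSet[mΩ] t1 := hm₁ t1 ht1
  have hmt2 : MeasurableSet[mΩ] t2 := hm₂ t2 ht2
  set f1 : Ω → ℝ := t1.indicator (fun _ => 1) with hf1
  set f2 : Ω → ℝ := t2.indicator (fun _ => 1) with hf2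
  have hint2 : Integrable f2 μ := (integrable_const (1:ℝ)).indicator hmt2
  have hprod : (t1 ∩ t2).indicator (fun _ => (1:ℝ)) = f1 * f2 := by
    funext ω
    by_cases h1 : ω ∈ t1 <;> by_cases h2 : ω ∈ t2 <;>
      simp [hf1, hf2, Set.indicator_apply, h1, h2, Set.mem_inter_iff]
  have hint12 : Integrable (f1 * f2) μ := by
    rw [← hprod]; exact (integrable_const (1:ℝ)).indicator (hmt1.inter hmt2)
  have hIf2 : (∫ x, f2 x ∂μ) = (μ t2).toReal := by
    rw [hf2, integral_indicator_const (1:ℝ) hmt2, smul_eq_mul, mul_one]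
    rfl
  have hsm2 : StronglyMeasurable[m₂] f2 := by
    exact (@stronglyMeasurable_const Ω ℝ m₂ _ (1:ℝ)).indicator ht2
  have hcond2M : μ[f2 | m₁ ⊔ m'] =ᵐ[μ] fun _ => (μ t2).toReal := by
    have := condExp_indep_eq hm₂ hM hsm2 h.symm
    simpa [hIf2] using this
  have hcond2 : μ[f2 | m'] =ᵐ[μ] fun _ => (μ t2).toReal := by
    have hindep' : Indep m₂ m' μ := indep_of_indep_of_le_right h.symm le_sup_right
    have := condExp_indep_eq hm₂ hm' hsm2 hindep'
    simpa [hIf2] using this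
  have hsm1 : StronglyMeasurable[m₁ ⊔ m'] f1 := by
    exact (@stronglyMeasurable_const Ω ℝ (m₁ ⊔ m') _ (1:ℝ)).indicator ht1'
  have hkey : μ[f1 * f2 | m₁ ⊔ m'] =ᵐ[μ] fun ω => (μ t2).toReal * f1 ω := by
    have h1 : μ[f1 * f2 | m₁ ⊔ m'] =ᵐ[μ] f1 * μ[f2 | m₁ ⊔ m'] :=
      condExp_mul_of_stronglyMeasurable_left hsm1 hint12 hint2
    refine h1.trans ?_
    filter_upwards [hcond2M] with ω hω
    simp only [Pi.mul_apply, hω]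
    ring
  have htower : μ[f1 * f2 | m'] =ᵐ[μ] fun ω => (μ t2).toReal * (μ[f1 | m']) ω := by
    have h1 : μ[μ[f1 * f2 | m₁ ⊔ m'] | m'] =ᵐ[μ] μ[f1 * f2 | m'] :=
      condExp_condExp_of_le le_sup_right hM
    have h2 : μ[μ[f1 * f2 | m₁ ⊔ m'] | m'] =ᵐ[μ] μ[(μ t2).toReal • f1 | m'] :=
      condExp_congr_ae (hkey.trans (by filter_upwards with ω; simp [smul_eq_mul]))
    have h3 : μ[(μ t2).toReal • f1 | m'] =ᵐ[μ] (μ t2).toReal • μ[f1 | m'] :=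
      condExp_smul _ _ _
    refine h1.symm.trans (h2.trans (h3.trans ?_))
    filter_upwards with ω; simp [smul_eq_mul]
  calc μ[(t1 ∩ t2).indicator (fun _ => (1:ℝ)) | m'] = μ[f1 * f2 | m'] := by rw [hprod]
    _ =ᵐ[μ] fun ω => (μ t2).toReal * (μ[f1 | m']) ω := htower
    _ =ᵐ[μ] μ[f1 | m'] * μ[f2 | m'] := by
        filter_upwards [hcond2] with ω hω
        simp only [Pi.mul_apply, hω]; ring


abbrev PastT (K m : ℕ) := Bool × ({k : Fin K // (k : ℕ) < m} → Fin 3 × Bool)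
abbrev FutT (K m : ℕ) := {k : Fin K // ¬ (k : ℕ) < m} → Fin 3 × Bool

def pastMap (K m : ℕ) (ω : Omega K) : PastT K m := (ω.1, fun k => (ω.2.1 k, ω.2.2 k))
def futMap (K m : ℕ) (ω : Omega K) : FutT K m := fun k => (ω.2.1 k, ω.2.2 k)

def splitEquiv (K m : ℕ) : Omega K ≃ PastT K m × FutT K m where
  toFun ω := (pastMap K m ω, futMap K m ω)
  invFun p := (p.1.1,
    fun k => if h : (k : ℕ) < m then (p.1.2 ⟨k, h⟩).1 else (p.2 ⟨k, h⟩).1,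
    fun k => if h : (k : ℕ) < m then (p.1.2 ⟨k, h⟩).2 else (p.2 ⟨k, h⟩).2)
  left_inv ω := by
    refine Prod.ext rfl (Prod.ext (funext fun k => ?_) (funext fun k => ?_)) <;>
      by_cases h : (k : ℕ) < m <;> simp [pastMap, futMap, h]
  right_inv p := by
    refine Prod.ext (Prod.ext rfl (funext fun k => ?_)) (funext fun k => ?_)
    · simp [pastMap, dif_pos k.2]
    · simp [futMap, dif_neg k.2]

lemma unif_singleton (K : ℕ) (a : Omega K) :
    unif K {a} = ((Fintype.card (Omega K) : ENNReal))⁻¹ := by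
  rw [unif, PMF.toMeasure_apply_singleton _ a (measurableSet_singleton a),
    PMF.uniformOfFintype_apply]

lemma unif_map_split (K m : ℕ) :
    (unif K).map (splitEquiv K m) =
      ((PMF.uniformOfFintype (PastT K m)).toMeasure).prod
        ((PMF.uniformOfFintype (FutT K m)).toMeasure) := by
  apply Measure.ext_of_singleton
  intro z
  have hpre : (⇑(splitEquiv K m)) ⁻¹' {z} = {(splitEquiv K m).symm z} := by
    ext ω
    simp [Set.mem_preimage, Equiv.apply_eq_iff_eq_symm_apply]
  rw [Measure.map_apply (measurable_of_countable _) (measurableSet_singleton z), hpre,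
    unif_singleton]
  have hz : ({z} : Set (PastT K m × FutT K m)) = {z.1} ×ˢ {z.2} := by
    simp
  rw [hz, Measure.prod_prod,
    PMF.toMeasure_apply_singleton _ z.1 (measurableSet_singleton z.1),
    PMF.toMeasure_apply_singleton _ z.2 (measurableSet_singleton z.2),
    PMF.uniformOfFintype_apply, PMF.uniformOfFintype_apply]
  rw [Fintype.card_congr (splitEquiv K m), Fintype.card_prod]
  push_cast
  rw [ENNReal.mul_inv (Or.inl (by exact_mod_cast Fintype.card_ne_zero)) (Or.inl (ENNReal.natCast_ne_top _))]

lemma indepFun_past_fut (K m : ℕ) :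
    IndepFun (pastMap K m) (futMap K m) (unif K) := by
  haveI : IsProbabilityMeasure (unif K) := PMF.toMeasure.isProbabilityMeasure _
  rw [indepFun_iff_map_prod_eq_prod_map_map (measurable_of_countable _).aemeasurable
    (measurable_of_countable _).aemeasurable]
  have h1 : (unif K).map (fun ω => (pastMap K m ω, futMap K m ω)) =
      (unif K).map (splitEquiv K m) := rfl
  have h2 : (unif K).map (pastMap K m) = (PMF.uniformOfFintype (PastT K m)).toMeasure := by
    have : pastMap K m = Prod.fst ∘ ⇑(splitEquiv K m) := rfl
    rw [this, ← Measure.map_map measurable_fst (measurable_of_countable _), unif_map_split,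
      Measure.map_fst_prod]
    simp
  have h3 : (unif K).map (futMap K m) = (PMF.uniformOfFintype (FutT K m)).toMeasure := by
    have : futMap K m = Prod.snd ∘ ⇑(splitEquiv K m) := rfl
    rw [this, ← Measure.map_map measurable_snd (measurable_of_countable _), unif_map_split,
      Measure.map_snd_prod]
    simp
  rw [h1, h2, h3, unif_map_split]

lemma comap_comp_le' {α β γ : Type*} [mα : MeasurableSpace α] [mβ : MeasurableSpace β]
    [mγ : MeasurableSpace γ] [Countable β] [MeasurableSingletonClass β]
    (f : α → β) (g : β → γ) :
    MeasurableSpace.comap (g ∘ f) mγ ≤ MeasurableSpace.comap f mβ := by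
  rintro s ⟨t, _, rfl⟩
  exact ⟨g ⁻¹' t, (Set.to_countable _).measurableSet, (Set.preimage_comp).symm⟩


theorem gamma_eq_comp (K m : ℕ) :
    gammaRV (K := K) m = (fun p : PastT K m =>
      sgn p.1 * (-1) ^ (∑ j : {k : Fin K // (k : ℕ) < m},
        if (p.2 j).1 = 0 then 1 else 0)) ∘ pastMap K m := by
  funext ω
  simp only [gammaRV, epsRV, Function.comp_apply, pastMap]
  congr 1
  rw [Finset.sum_subtype (p := fun k : Fin K => (k : ℕ) < m)
    (Finset.univ.filter (fun k : Fin K => (k : ℕ) < m)) (by simp) (fun k => alphaN k ω)]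
  rfl

end Aux

/-- Conditional independence: the σ-algebra generated by `(α_k, β_k)` for `l ≤ k ≤ m`
is independent of the σ-algebra generated by `(α_k, β_k)` for `m+1 ≤ k ≤ n`,
conditionally on `γ_{m+1}`. (Indices are 1-based as in the paper: the coordinate
`k : Fin K` carries the paper's index `k+1`, and `gammaRV m` is the paper's `γ_{m+1}`.) -/
theorem stmt11 (K l m n : ℕ) (hl : 1 ≤ l) (hlm : l ≤ m) (hmn : m < n) (hnK : n ≤ K) :
    ProbabilityTheory.CondIndep
      (MeasurableSpace.comap (gammaRV (K := K) m) inferInstance)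
      (⨆ k : Fin K, ⨆ _ : l ≤ (k : ℕ) + 1 ∧ (k : ℕ) + 1 ≤ m,
        MeasurableSpace.comap (fun ω : Omega K => (ω.2.1 k, ω.2.2 k)) inferInstance)
      (⨆ k : Fin K, ⨆ _ : m + 1 ≤ (k : ℕ) + 1 ∧ (k : ℕ) + 1 ≤ n,
        MeasurableSpace.comap (fun ω : Omega K => (ω.2.1 k, ω.2.2 k)) inferInstance)
      (fun s _ => s.toFinite.measurableSet) (unif K) := by
  haveI : DiscreteMeasurableSpace (Omega K) := ⟨fun s => (Set.to_countable s).measurableSet⟩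
  have hIndep : Indep (MeasurableSpace.comap (pastMap K m) inferInstance)
      (MeasurableSpace.comap (futMap K m) inferInstance) (unif K) := indepFun_past_fut K m
  have ha : (⨆ k : Fin K, ⨆ _ : l ≤ (k : ℕ) + 1 ∧ (k : ℕ) + 1 ≤ m,
      MeasurableSpace.comap (fun ω : Omega K => (ω.2.1 k, ω.2.2 k)) inferInstance)
      ≤ MeasurableSpace.comap (pastMap K m) inferInstance := by
    refine iSup_le fun k => iSup_le fun hk => ?_
    have hkm : (k : ℕ) < m := Nat.lt_of_succ_le hk.2
    have hco : (fun ω : Omega K => (ω.2.1 k, ω.2.2 k)) =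
        (fun p : PastT K m => p.2 ⟨k, hkm⟩) ∘ pastMap K m := rfl
    rw [hco]
    exact comap_comp_le' _ _
  have hb : MeasurableSpace.comap (gammaRV (K := K) m) inferInstance
      ≤ MeasurableSpace.comap (pastMap K m) inferInstance := by
    rw [gamma_eq_comp K m]
    exact comap_comp_le' _ _
  have hc : (⨆ k : Fin K, ⨆ _ : m + 1 ≤ (k : ℕ) + 1 ∧ (k : ℕ) + 1 ≤ n,
      MeasurableSpace.comap (fun ω : Omega K => (ω.2.1 k, ω.2.2 k)) inferInstance)
      ≤ MeasurableSpace.comap (futMap K m) inferInstance := by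
    refine iSup_le fun k => iSup_le fun hk => ?_
    have hkm : ¬ (k : ℕ) < m := Nat.not_lt.mpr (Nat.succ_le_succ_iff.mp hk.1)
    have hco : (fun ω : Omega K => (ω.2.1 k, ω.2.2 k)) =
        (fun q : FutT K m => q ⟨k, hkm⟩) ∘ futMap K m := rfl
    rw [hco]
    exact comap_comp_le' _ _
  have h : Indep ((⨆ k : Fin K, ⨆ _ : l ≤ (k : ℕ) + 1 ∧ (k : ℕ) + 1 ≤ m,
        MeasurableSpace.comap (fun ω : Omega K => (ω.2.1 k, ω.2.2 k)) inferInstance)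
      ⊔ MeasurableSpace.comap (gammaRV (K := K) m) inferInstance)
      (⨆ k : Fin K, ⨆ _ : m + 1 ≤ (k : ℕ) + 1 ∧ (k : ℕ) + 1 ≤ n,
        MeasurableSpace.comap (fun ω : Omega K => (ω.2.1 k, ω.2.2 k)) inferInstance)
      (unif K) :=
    indep_of_indep_of_le_right (indep_of_indep_of_le_left hIndep (sup_le ha hb)) hc
  exact condIndep_of_indep_sup _ (fun s _ => (Set.to_countable s).measurableSet)
    (fun s _ => (Set.to_countable s).measurableSet) h
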